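/- arXiv:1807.04209 — 2 statements merged into one kernel-verified Lean document; each statement's English description precedes it below -/
import Mathlib

section
/- Let ε, δ be reals with 0 < ε ≤ 0.5 and 0 < δ ≤ 0.1, and let k ≥ 10 be an integer. Set ε₀ := 2ε/√(10·k·log(1/δ)). Then ε₀·√(2·k·log(1/δ)) + k·ε₀·(e^{ε₀} − 1) ≤ ε. -/
open Real

set_option maxHeartbeats 1000000

lemma exp_point_one_le : Real.exp 0.1 ≤ 10/9 := by
  have h1 : (0.9:ℝ) ≤ Real.exp (-0.1) := by
    have := Real.add_one_le_exp (-0.1:ℝ); linarith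
  have h2 : Real.exp 0.1 * Real.exp (-0.1) = 1 := by
    rw [← Real.exp_add]; norm_num
  nlinarith [Real.exp_pos (0.1:ℝ)]

lemma exp_two_one_le : Real.exp 2.1 ≤ 10 := by
  have h : Real.exp 2.1 = Real.exp 1 * Real.exp 1 * Real.exp 0.1 := by
    rw [← Real.exp_add, ← Real.exp_add]; norm_num
  have he := Real.exp_one_lt_d9
  have h01 := exp_point_one_le
  have hp := (Real.exp_pos (1:ℝ)).le
  have hp2 := (Real.exp_pos (0.1:ℝ)).le
  nlinarith

/-- **Analytic core of Theorem 2.7**: for `0 < ε ≤ 0.5`, `0 < δ ≤ 0.1`, `k ≥ 10` and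
`ε₀ = 2ε/√(10·k·log(1/δ))`, one has `ε₀·√(2·k·log(1/δ)) + k·ε₀·(e^{ε₀} − 1) ≤ ε`. -/
theorem advanced_composition_budget
    (ε δ : ℝ) (hε0 : 0 < ε) (hε : ε ≤ 0.5) (hδ0 : 0 < δ) (hδ : δ ≤ 0.1)
    (k : ℕ) (hk : 10 ≤ k) :
    (2 * ε / Real.sqrt (10 * k * Real.log (1 / δ))) *
        Real.sqrt (2 * k * Real.log (1 / δ))
      + k * (2 * ε / Real.sqrt (10 * k * Real.log (1 / δ))) *
          (Real.exp (2 * ε / Real.sqrt (10 * k * Real.log (1 / δ))) - 1)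
      ≤ ε := by
  have hk' : (10:ℝ) ≤ (k:ℝ) := by exact_mod_cast hk
  set L := Real.log (1 / δ) with hLdef
  have h10 : (10:ℝ) ≤ 1/δ := by
    rw [le_div_iff₀ hδ0]; linarith
  have hlog10 : (2.1:ℝ) ≤ Real.log 10 :=
    (Real.le_log_iff_exp_le (by norm_num)).2 exp_two_one_le
  have hL : (2.1:ℝ) ≤ L := by
    have := Real.log_le_log (by norm_num : (0:ℝ) < 10) h10
    linarith
  have hkL : (21:ℝ) ≤ (k:ℝ) * L := by nlinarith
  have hA : (0:ℝ) < 10 * k * L := by nlinarith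
  set s := Real.sqrt (10 * k * L) with hsdef
  set t := Real.sqrt (2 * k * L) with htdef
  have hspos : 0 < s := Real.sqrt_pos.2 hA
  have hs2 : s ^ 2 = 10 * k * L := Real.sq_sqrt hA.le
  have ht0 : 0 ≤ t := Real.sqrt_nonneg _
  have ht2 : t ^ 2 = 2 * k * L := Real.sq_sqrt (by nlinarith)
  have hs14 : (14.4:ℝ) ≤ s := by nlinarith
  set u := 2 * ε / s with hudef
  have hus : u * s = 2 * ε := div_mul_cancel₀ _ hspos.ne'
  have hu0 : 0 < u := div_pos (by linarith) hspos
  clear_value L s t u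
  have hu07 : u ≤ 0.07 := by nlinarith [mul_nonneg hu0.le (by linarith : (0:ℝ) ≤ s - 14.4)]
  -- exp u ≤ 100/93
  have hnegu : (0.93:ℝ) ≤ Real.exp (-u) := by
    have := Real.add_one_le_exp (-u); linarith
  have hmul : Real.exp u * Real.exp (-u) = 1 := by
    rw [← Real.exp_add]; simp
  have hexpu : Real.exp u ≤ 100/93 := by
    nlinarith [Real.exp_pos u]
  -- exp u - 1 ≤ u * (100/93)
  have hE : Real.exp u - 1 ≤ u * (100/93) := by
    have h1u : 1 - Real.exp (-u) ≤ u := by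
      have := Real.add_one_le_exp (-u); linarith
    have hstep : Real.exp u * (1 - Real.exp (-u)) ≤ Real.exp u * u :=
      mul_le_mul_of_nonneg_left h1u (Real.exp_pos u).le
    rw [mul_sub, mul_one, hmul] at hstep
    have hstep2 : Real.exp u * u ≤ (100/93) * u :=
      mul_le_mul_of_nonneg_right hexpu hu0.le
    linarith
  -- first term bound
  have h2t : 2 * t ≤ 0.895 * s := by
    have hsum : (0:ℝ) < 2 * t + 0.895 * s := by linarith
    nlinarith [ht2, hs2, hkL, hsum]
  have h1 : 2 * ε * t ≤ 0.895 * (ε * s) := by nlinarith [mul_le_mul_of_nonneg_left h2t hε0.le]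
  -- second term bound
  have h2' : (k:ℝ) * (2 * ε) * (u * (100/93)) * s ≤ 0.105 * (ε * s) * s := by
    have hexpand : (k:ℝ) * (2 * ε) * (u * (100/93)) * s = (400/93) * k * ε^2 := by
      have : (k:ℝ) * (2 * ε) * (u * (100/93)) * s = (200/93) * k * ε * (u * s) := by ring
      rw [this, hus]; ring
    rw [hexpand]
    have : 0.105 * (ε * s) * s = 0.105 * ε * (10 * k * L) := by
      have : 0.105 * (ε * s) * s = 0.105 * ε * s ^ 2 := by ring
      rw [this, hs2]
    rw [this]
    have hk0 : (0:ℝ) ≤ (k:ℝ) := by linarith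
    nlinarith [mul_nonneg (mul_nonneg hk0 hε0.le) (by linarith : (0:ℝ) ≤ L - 2.1),
      mul_nonneg (mul_nonneg hk0 hε0.le) (by linarith : (0:ℝ) ≤ 0.5 - ε),
      mul_nonneg hk0 hε0.le]
  have h2'' : (k:ℝ) * (2 * ε) * (u * (100/93)) ≤ 0.105 * (ε * s) :=
    le_of_mul_le_mul_right (by linarith) hspos
  have h2 : (k:ℝ) * (2 * ε) * (Real.exp u - 1) ≤ 0.105 * (ε * s) := by
    have hk2ε : (0:ℝ) ≤ (k:ℝ) * (2 * ε) := by positivity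
    calc (k:ℝ) * (2 * ε) * (Real.exp u - 1) ≤ (k:ℝ) * (2 * ε) * (u * (100/93)) :=
          mul_le_mul_of_nonneg_left hE hk2ε
      _ ≤ 0.105 * (ε * s) := h2''
  -- combine
  have hgoal : u * t + (k:ℝ) * u * (Real.exp u - 1)
      = (2 * ε * t + (k:ℝ) * (2 * ε) * (Real.exp u - 1)) / s := by
    rw [hudef]; field_simp
  rw [hgoal, div_le_iff₀ hspos]
  linarith
end

section
/- For every constant a > 0 there exist a constant K > 0 and an integer n₀ such that for all n ≥ n₀ and every integer t with n/2 ≤ t ≤ n satisfying Σ_{i=t}^{n} C(n,i) ≥ 2ⁿ · n^{−a}, one has C(n, t−1) / Σ_{i=t}^{n} C(n,i) ≤ K·√((log n)/n), where C(n,i) denotes the binomial coefficient n choose i. -/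
open Real Finset


lemma choose_le_two_pow' (n k : ℕ) : (n.choose k) ≤ 2 ^ n := by
  rcases le_or_gt k n with h | h
  · calc n.choose k ≤ ∑ m ∈ range (n+1), n.choose m :=
        Finset.single_le_sum (fun i _ => Nat.zero_le _) (by simp [Nat.lt_succ_iff, h])
      _ = 2 ^ n := Nat.sum_range_choose n
  · simp [Nat.choose_eq_zero_of_lt h]

lemma choose_step (n j : ℕ) (hj : j < n) :
    (n.choose (j+1) : ℝ) * (j + 1) = (n.choose j : ℝ) * ((n : ℝ) - j) := by
  have h := Nat.choose_succ_right_eq n j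
  have : ((n.choose (j+1) * (j+1) : ℕ) : ℝ) = ((n.choose j * (n - j) : ℕ) : ℝ) := by
    exact_mod_cast congrArg (Nat.cast (R := ℝ)) h
  push_cast [Nat.cast_sub hj.le] at this
  linarith [this]

lemma chain_le (n : ℕ) (q : ℝ) (hq : 0 ≤ q) :
    ∀ (k s : ℕ), s + k ≤ n →
      (∀ j, s ≤ j → j < s + k → ((n : ℝ) - j) ≤ q * ((j : ℝ) + 1)) →
      (n.choose (s + k) : ℝ) ≤ q ^ k * n.choose s := by
  intro k
  induction k with
  | zero => intro s _ _; simp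
  | succ k ih =>
    intro s hsk hj
    have hlt : s + k < n := by omega
    have h1 := choose_step n (s + k) hlt
    have h2 : (n.choose (s + k) : ℝ) ≤ q ^ k * n.choose s :=
      ih s (by omega) (fun j h1 h2 => hj j h1 (by omega))
    have h3 : ((n : ℝ) - (s + k)) ≤ q * ((s + k : ℕ) + 1) := by
      have := hj (s + k) (by omega) (by omega)
      push_cast at this ⊢; linarith
    have hpos : (0 : ℝ) < (s + k : ℕ) + 1 := by positivity
    have key : (n.choose (s + k + 1) : ℝ) * ((s + k : ℕ) + 1) ≤
        (q * n.choose (s + k)) * ((s + k : ℕ) + 1) := by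
      rw [show ((s:ℕ) + k + 1 : ℕ) = (s + k) + 1 from rfl] at *
      push_cast at h1 ⊢
      calc (n.choose (s + k + 1) : ℝ) * ((s : ℝ) + k + 1)
          = (n.choose (s + k) : ℝ) * ((n : ℝ) - (s + k)) := by push_cast at h1; linarith [h1]
        _ ≤ (n.choose (s + k) : ℝ) * (q * ((s : ℝ) + k + 1)) := by
            apply mul_le_mul_of_nonneg_left _ (by positivity)
            push_cast at h3; linarith
        _ = (q * n.choose (s + k)) * ((s : ℝ) + k + 1) := by ring
    have h4 : (n.choose (s + k + 1) : ℝ) ≤ q * n.choose (s + k) :=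
      le_of_mul_le_mul_right (by push_cast at key ⊢; linarith) hpos
    calc (n.choose (s + (k+1)) : ℝ) = (n.choose (s + k + 1) : ℝ) := by ring_nf
      _ ≤ q * n.choose (s + k) := h4
      _ ≤ q * (q ^ k * n.choose s) := by
          apply mul_le_mul_of_nonneg_left h2 hq
      _ = q ^ (k+1) * n.choose s := by ring

lemma chain_ge (n : ℕ) (q : ℝ) (hq : 0 ≤ q) :
    ∀ (k s : ℕ), s + k ≤ n →
      (∀ j, s ≤ j → j < s + k → q * ((j : ℝ) + 1) ≤ ((n : ℝ) - j)) →
      q ^ k * n.choose s ≤ (n.choose (s + k) : ℝ) := by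
  intro k
  induction k with
  | zero => intro s _ _; simp
  | succ k ih =>
    intro s hsk hj
    have hlt : s + k < n := by omega
    have h1 := choose_step n (s + k) hlt
    have h2 : q ^ k * n.choose s ≤ (n.choose (s + k) : ℝ) :=
      ih s (by omega) (fun j ha hb => hj j ha (by omega))
    have h3 : q * ((s + k : ℕ) + 1) ≤ ((n : ℝ) - (s + k)) := by
      have := hj (s + k) (by omega) (by omega)
      push_cast at this ⊢; linarith
    have hpos : (0 : ℝ) < (s : ℝ) + k + 1 := by positivity
    have key : (q * n.choose (s + k)) * ((s : ℝ) + k + 1) ≤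
        (n.choose (s + k + 1) : ℝ) * ((s : ℝ) + k + 1) := by
      push_cast at h1 h3
      calc (q * n.choose (s + k)) * ((s : ℝ) + k + 1)
          = (n.choose (s + k) : ℝ) * (q * ((s : ℝ) + k + 1)) := by ring
        _ ≤ (n.choose (s + k) : ℝ) * ((n : ℝ) - (s + k)) := by
            apply mul_le_mul_of_nonneg_left _ (by positivity)
            linarith
        _ = (n.choose (s + k + 1) : ℝ) * ((s : ℝ) + k + 1) := by linarith
    have h4 : q * n.choose (s + k) ≤ (n.choose (s + k + 1) : ℝ) :=
      le_of_mul_le_mul_right key hpos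
    calc q ^ (k+1) * n.choose s = q * (q ^ k * n.choose s) := by ring
      _ ≤ q * n.choose (s + k) := mul_le_mul_of_nonneg_left h2 hq
      _ ≤ (n.choose (s + k + 1) : ℝ) := h4
      _ = (n.choose (s + (k+1)) : ℝ) := by ring_nf

lemma choose_anti (n s i : ℕ) (hm : n ≤ 2 * s) (hsi : s ≤ i) (hin : i ≤ n) :
    (n.choose i : ℝ) ≤ (n.choose s : ℝ) := by
  have h := chain_le n 1 zero_le_one (i - s) s (by omega) (fun j hj1 hj2 => by
    have hj : n ≤ 2 * j := by omega
    have : (n : ℝ) ≤ 2 * j := by exact_mod_cast hj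
    linarith)
  rw [show s + (i - s) = i by omega] at h
  simpa using h

lemma sum_upper (n t : ℕ) (hm : n ≤ 2 * t) (htn : t ≤ n) :
    ∑ i ∈ Finset.Icc t n, (n.choose i : ℝ) ≤ ((n : ℝ) + 1) * (n.choose t : ℝ) := by
  calc ∑ i ∈ Finset.Icc t n, (n.choose i : ℝ)
      ≤ ∑ _i ∈ Finset.Icc t n, (n.choose t : ℝ) := by
        apply Finset.sum_le_sum
        intro i hi
        simp only [Finset.mem_Icc] at hi
        exact choose_anti n t i hm hi.1 hi.2
    _ = ((n - t + 1 : ℕ) : ℝ) * (n.choose t : ℝ) := by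
        rw [Finset.sum_const, Nat.card_Icc, nsmul_eq_mul]
        congr 2
        omega
    _ ≤ ((n : ℝ) + 1) * (n.choose t : ℝ) := by
        apply mul_le_mul_of_nonneg_right _ (by positivity)
        have : (n - t + 1 : ℕ) ≤ n + 1 := by omega
        exact_mod_cast this

lemma sum_lower (n t L : ℕ) (q : ℝ) (hq0 : 0 ≤ q) (hq1 : q ≤ 1) (h : t + L ≤ n)
    (hr : ∀ j : ℕ, t ≤ j → j < t + L → q * ((j : ℝ) + 1) ≤ ((n : ℝ) - j)) :
    ((L : ℝ) + 1) * (q ^ L * (n.choose t : ℝ)) ≤ ∑ i ∈ Finset.Icc t n, (n.choose i : ℝ) := by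
  have hsub : Finset.Icc t (t + L) ⊆ Finset.Icc t n := by
    apply Finset.Icc_subset_Icc_right h
  calc ((L : ℝ) + 1) * (q ^ L * (n.choose t : ℝ))
      = ∑ _i ∈ Finset.Icc t (t + L), q ^ L * (n.choose t : ℝ) := by
        rw [Finset.sum_const, Nat.card_Icc, nsmul_eq_mul,
          show t + L + 1 - t = L + 1 by omega]
        push_cast
        ring
    _ ≤ ∑ i ∈ Finset.Icc t (t + L), (n.choose i : ℝ) := by
        apply Finset.sum_le_sum
        intro i hi
        simp only [Finset.mem_Icc] at hi
        have hk := chain_ge n q hq0 (i - t) t (by omega) (fun j hj1 hj2 => hr j hj1 (by omega))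
        rw [show t + (i - t) = i by omega] at hk
        calc q ^ L * (n.choose t : ℝ) ≤ q ^ (i - t) * (n.choose t : ℝ) := by
              apply mul_le_mul_of_nonneg_right _ (by positivity)
              exact pow_le_pow_of_le_one hq0 hq1 (by omega)
          _ ≤ (n.choose i : ℝ) := hk
    _ ≤ ∑ i ∈ Finset.Icc t n, (n.choose i : ℝ) := by
        apply Finset.sum_le_sum_of_subset_of_nonneg hsub
        intro i _ _
        positivity

lemma choose_upper (n m D : ℕ) (hn : 1 ≤ n) (hm : n ≤ 2 * m) (ht : m + D ≤ n) :
    (n.choose (m + D) : ℝ) ≤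
      Real.exp (-(((D / 2 : ℕ) : ℝ) ^ 2 / n)) * 2 ^ n := by
  set h : ℕ := D / 2 with hh
  have hnR : (0 : ℝ) < n := by exact_mod_cast hn
  have hq0 : (0 : ℝ) ≤ 1 - (h : ℝ) / n := by
    have : (h : ℝ) ≤ n := by exact_mod_cast (by omega : h ≤ n)
    rw [sub_nonneg, div_le_one hnR]
    exact this
  have hchain := chain_le n (1 - (h : ℝ) / n) hq0 (D - h) (m + h) (by omega)
    (fun j hj1 hj2 => by
      have hjn : j < n := by omega
      have hmr : (n : ℝ) ≤ 2 * m := by exact_mod_cast hm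
      have hjr1 : (m : ℝ) + h ≤ j := by exact_mod_cast hj1
      have hjr2 : (j : ℝ) + 1 ≤ n := by exact_mod_cast hjn
      have hhn : (h : ℝ) ≤ n := by exact_mod_cast (by omega : h ≤ n)
      -- need (n - j) ≤ (1 - h/n)(j+1)
      have key : (h : ℝ) * ((j : ℝ) + 1) / n ≤ h + 1 := by
        rw [div_le_iff₀ hnR]
        nlinarith [Nat.cast_nonneg (α := ℝ) h]
      have expand : (1 - (h : ℝ) / n) * ((j : ℝ) + 1)
          = ((j : ℝ) + 1) - (h : ℝ) * ((j : ℝ) + 1) / n := by ring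
      rw [expand]
      nlinarith)
  rw [show m + h + (D - h) = m + D by omega] at hchain
  have h2n : (n.choose (m + h) : ℝ) ≤ 2 ^ n := by exact_mod_cast choose_le_two_pow' n (m + h)
  have hq1 : 1 - (h : ℝ) / n ≤ 1 := by
    have : (0:ℝ) ≤ (h : ℝ) / n := by positivity
    linarith
  have hmono : (1 - (h : ℝ) / n) ^ (D - h) ≤ (1 - (h : ℝ) / n) ^ h :=
    pow_le_pow_of_le_one hq0 hq1 (by omega)
  have hexp : (1 - (h : ℝ) / n) ^ h ≤ Real.exp (-(((h : ℕ) : ℝ) ^ 2 / n)) := by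
    have h1 : 1 - (h : ℝ) / n ≤ Real.exp (-((h : ℝ) / n)) := by
      have := Real.add_one_le_exp (-((h : ℝ) / n))
      linarith
    calc (1 - (h : ℝ) / n) ^ h ≤ (Real.exp (-((h : ℝ) / n))) ^ h :=
          pow_le_pow_left₀ hq0 h1 h
      _ = Real.exp (-((h : ℝ) / n) * h) := by
          rw [← Real.exp_nat_mul]; ring_nf
      _ = Real.exp (-(((h : ℕ) : ℝ) ^ 2 / n)) := by
          congr 1; ring
  calc (n.choose (m + D) : ℝ) ≤ (1 - (h : ℝ) / n) ^ (D - h) * (n.choose (m + h) : ℝ) := hchain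
    _ ≤ (1 - (h : ℝ) / n) ^ h * 2 ^ n := by
        apply mul_le_mul hmono h2n (by positivity) (by positivity)
    _ ≤ Real.exp (-(((h : ℕ) : ℝ) ^ 2 / n)) * 2 ^ n := by
        apply mul_le_mul_of_nonneg_right hexp (by positivity)

set_option maxHeartbeats 1000000 in
/-- **Quantitative claim of Example 2.1** (multiplicative sensitivity of the binomial test
p-value): for every `a > 0` there are `K > 0` and `n₀` such that for all `n ≥ n₀` and
`n/2 ≤ t ≤ n` with `Σ_{i=t}^n C(n,i) ≥ 2ⁿ·n^{−a}`, one has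
`C(n,t−1)/Σ_{i=t}^n C(n,i) ≤ K·√((log n)/n)`. -/
theorem binomial_tail_ratio_bound (a : ℝ) (ha : 0 < a) :
    ∃ K : ℝ, 0 < K ∧ ∃ n₀ : ℕ, ∀ n : ℕ, n₀ ≤ n → ∀ t : ℕ,
      (n : ℝ) / 2 ≤ (t : ℝ) → t ≤ n →
      (2 : ℝ) ^ n * (n : ℝ) ^ (-a) ≤ ∑ i ∈ Finset.Icc t n, (n.choose i : ℝ) →
      (n.choose (t - 1) : ℝ) / ∑ i ∈ Finset.Icc t n, (n.choose i : ℝ)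
        ≤ K * Real.sqrt (Real.log n / n) := by
  set C₀ : ℝ := 48 * Real.sqrt (2 * (a + 2)) + 48 with hC₀def
  set c : ℝ := 16 * Real.sqrt (a + 2) + 16 with hcdef
  refine ⟨4 * Real.exp c, by positivity, ⌈C₀ ^ 4⌉₊, ?_⟩
  intro n hn t ht2 htn hsum
  have hsq2 : (0 : ℝ) ≤ Real.sqrt (2 * (a + 2)) := Real.sqrt_nonneg _
  have hC₀48 : (48 : ℝ) ≤ C₀ := by rw [hC₀def]; linarith only [hsq2]
  have hC₀0 : (0 : ℝ) ≤ C₀ := by linarith only [hC₀48]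
  have hn4 : C₀ ^ 4 ≤ (n : ℝ) := by
    calc C₀ ^ 4 ≤ (⌈C₀ ^ 4⌉₊ : ℝ) := Nat.le_ceil _
      _ ≤ (n : ℝ) := by exact_mod_cast hn
  set r : ℝ := Real.sqrt (Real.sqrt n) with hrdef
  have hsn0 : (0 : ℝ) ≤ Real.sqrt n := Real.sqrt_nonneg n
  have hr0 : (0 : ℝ) ≤ r := Real.sqrt_nonneg _
  have hrC : C₀ ≤ r := by
    have h1 : Real.sqrt (C₀ ^ 4) = C₀ ^ 2 := by
      rw [show C₀ ^ 4 = (C₀ ^ 2) ^ 2 by ring, Real.sqrt_sq (by positivity)]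
    have h2 : Real.sqrt (C₀ ^ 2) = C₀ := Real.sqrt_sq hC₀0
    calc C₀ = Real.sqrt (Real.sqrt (C₀ ^ 4)) := by rw [h1, h2]
      _ ≤ r := Real.sqrt_le_sqrt (Real.sqrt_le_sqrt hn4)
  have hnbig : (5308416 : ℝ) ≤ (n : ℝ) := by
    calc (5308416 : ℝ) = 48 ^ 4 := by norm_num
      _ ≤ C₀ ^ 4 := by apply pow_le_pow_left₀ (by norm_num) hC₀48
      _ ≤ (n : ℝ) := hn4
  have hn0 : (0 : ℝ) < (n : ℝ) := by linarith only [hnbig]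
  have hr2 : r ^ 2 = Real.sqrt n := Real.sq_sqrt hsn0
  have hnss : Real.sqrt n * Real.sqrt n = (n : ℝ) := Real.mul_self_sqrt hn0.le
  have hsn48 : (2304 : ℝ) ≤ Real.sqrt n := by
    calc (2304 : ℝ) = 48 ^ 2 := by norm_num
      _ ≤ C₀ ^ 2 := by apply pow_le_pow_left₀ (by norm_num) hC₀48
      _ ≤ r ^ 2 := by apply pow_le_pow_left₀ hC₀0 hrC
      _ = Real.sqrt n := hr2
  have hsnpos : (0 : ℝ) < Real.sqrt n := by linarith only [hsn48]
  have hlog2 : Real.log n ≤ 2 * Real.sqrt n := by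
    have h1 : Real.log (Real.sqrt n) = Real.log n / 2 := Real.log_sqrt hn0.le
    have h2 := Real.log_le_sub_one_of_pos hsnpos
    linarith only [h1, h2, hsn48]
  have hlog1 : (1 : ℝ) ≤ Real.log n := by
    rw [Real.le_log_iff_exp_le hn0]
    calc Real.exp 1 ≤ 2.7182818286 := (Real.exp_one_lt_d9).le
      _ ≤ (n : ℝ) := by linarith only [hnbig]
  have hlogpos : (0 : ℝ) < Real.log n := by linarith only [hlog1]
  -- natural number setup
  have hn3 : 3 ≤ n := by
    exact_mod_cast (show (3:ℝ) ≤ (n:ℝ) by linarith only [hnbig])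
  have hnt : n ≤ 2 * t := by
    have : (n : ℝ) ≤ ((2 * t : ℕ) : ℝ) := by push_cast; linarith only [ht2]
    exact_mod_cast this
  set m : ℕ := (n + 1) / 2 with hmdef
  have hm : n ≤ 2 * m := by omega
  have hm2 : 2 * m ≤ n + 1 := by omega
  have hmt : m ≤ t := by omega
  set D : ℕ := t - m with hDdef
  have htD : t = m + D := by omega
  set hf : ℕ := D / 2 with hfdef
  set S : ℝ := ∑ i ∈ Finset.Icc t n, (n.choose i : ℝ) with hSdef
  have hS0 : (0 : ℝ) < S := lt_of_lt_of_le (by positivity) hsum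
  -- upper bound on S and extraction of the bound on hf
  have hupper : S ≤ ((n : ℝ) + 1) * (Real.exp (-(((hf : ℕ) : ℝ) ^ 2 / n)) * 2 ^ n) := by
    calc S ≤ ((n : ℝ) + 1) * (n.choose t : ℝ) := sum_upper n t hnt htn
      _ ≤ ((n : ℝ) + 1) * (Real.exp (-(((hf : ℕ) : ℝ) ^ 2 / n)) * 2 ^ n) := by
          apply mul_le_mul_of_nonneg_left _ (by positivity)
          rw [htD]
          exact choose_upper n m D (by omega) hm (by omega)
  have hhB2 : ((hf : ℕ) : ℝ) ^ 2 ≤ (a + 2) * ((n : ℝ) * Real.log n) := by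
    have h2pow : (0 : ℝ) < (2 : ℝ) ^ n := by positivity
    set E : ℝ := Real.exp (-(((hf : ℕ) : ℝ) ^ 2 / n)) with hEdef
    have hE : (0 : ℝ) < E := Real.exp_pos _
    have hstep : (n : ℝ) ^ (-a) ≤ ((n : ℝ) + 1) * E := by
      have h := le_trans hsum hupper
      have h' : (n : ℝ) ^ (-a) * 2 ^ n ≤ (((n : ℝ) + 1) * E) * 2 ^ n := by
        calc (n : ℝ) ^ (-a) * 2 ^ n = 2 ^ n * (n : ℝ) ^ (-a) := by ring
          _ ≤ ((n : ℝ) + 1) * (E * 2 ^ n) := h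
          _ = (((n : ℝ) + 1) * E) * 2 ^ n := by ring
      exact le_of_mul_le_mul_right h' h2pow
    have hna : (0 : ℝ) < (n : ℝ) ^ a := Real.rpow_pos_of_pos hn0 a
    have hinv : (n : ℝ) ^ (-a) * (n : ℝ) ^ a = 1 := by
      rw [← Real.rpow_add hn0]; simp
    have hone : 1 ≤ ((n : ℝ) + 1) * E * (n : ℝ) ^ a := by
      calc (1 : ℝ) = (n : ℝ) ^ (-a) * (n : ℝ) ^ a := hinv.symm
        _ ≤ (((n : ℝ) + 1) * E) * (n : ℝ) ^ a :=
            mul_le_mul_of_nonneg_right hstep hna.le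
        _ = ((n : ℝ) + 1) * E * (n : ℝ) ^ a := by ring
    have hEE : Real.exp (((hf : ℕ) : ℝ) ^ 2 / n) * E = 1 := by
      rw [hEdef, ← Real.exp_add]; simp
    have hexple : Real.exp (((hf : ℕ) : ℝ) ^ 2 / n) ≤ ((n : ℝ) + 1) * (n : ℝ) ^ a := by
      calc Real.exp (((hf : ℕ) : ℝ) ^ 2 / n)
          = Real.exp (((hf : ℕ) : ℝ) ^ 2 / n) * 1 := by ring
        _ ≤ Real.exp (((hf : ℕ) : ℝ) ^ 2 / n) * (((n : ℝ) + 1) * E * (n : ℝ) ^ a) :=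
            mul_le_mul_of_nonneg_left hone (Real.exp_pos _).le
        _ = (Real.exp (((hf : ℕ) : ℝ) ^ 2 / n) * E) * (((n : ℝ) + 1) * (n : ℝ) ^ a) := by ring
        _ = ((n : ℝ) + 1) * (n : ℝ) ^ a := by rw [hEE]; ring
    have hlogle : ((hf : ℕ) : ℝ) ^ 2 / n ≤ Real.log (((n : ℝ) + 1) * (n : ℝ) ^ a) := by
      rw [Real.le_log_iff_exp_le (by positivity)]
      exact hexple
    have hlogexpand : Real.log (((n : ℝ) + 1) * (n : ℝ) ^ a)
        = Real.log ((n : ℝ) + 1) + a * Real.log n := by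
      rw [Real.log_mul (by positivity) (by positivity), Real.log_rpow hn0]
    have hlogn1 : Real.log ((n : ℝ) + 1) ≤ 2 * Real.log n := by
      calc Real.log ((n : ℝ) + 1) ≤ Real.log ((n : ℝ) ^ 2) := by
            apply Real.log_le_log (by positivity)
            nlinarith only [hnbig, sq_nonneg ((n : ℝ) - 1)]
        _ = 2 * Real.log n := by rw [Real.log_pow]; push_cast; ring
    have hkey : ((hf : ℕ) : ℝ) ^ 2 / n ≤ (a + 2) * Real.log n := by
      rw [hlogexpand] at hlogle
      linarith only [hlogle, hlogn1]
    calc ((hf : ℕ) : ℝ) ^ 2 = (((hf : ℕ) : ℝ) ^ 2 / n) * n := by field_simp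
      _ ≤ ((a + 2) * Real.log n) * n := mul_le_mul_of_nonneg_right hkey hn0.le
      _ = (a + 2) * ((n : ℝ) * Real.log n) := by ring
  set B : ℝ := Real.sqrt ((a + 2) * ((n : ℝ) * Real.log n)) with hBdef
  have hB0 : 0 ≤ B := Real.sqrt_nonneg _
  have hhB : ((hf : ℕ) : ℝ) ≤ B := by
    rw [hBdef]
    exact (Real.le_sqrt (by positivity) (by positivity)).mpr hhB2
  have hDb : (D : ℝ) ≤ 2 * B + 1 := by
    have hD2 : D ≤ 2 * hf + 1 := by omega
    have h' : (D : ℝ) ≤ 2 * ((hf : ℕ) : ℝ) + 1 := by exact_mod_cast hD2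
    linarith only [h', hhB]
  have hBr : B ≤ Real.sqrt (2 * (a + 2)) * (Real.sqrt n * r) := by
    have hy0 : (0 : ℝ) ≤ Real.sqrt (2 * (a + 2)) * (Real.sqrt n * r) := by positivity
    have hle : (a + 2) * ((n : ℝ) * Real.log n)
        ≤ (Real.sqrt (2 * (a + 2)) * (Real.sqrt n * r)) ^ 2 := by
      have e1 : (Real.sqrt (2 * (a + 2))) ^ 2 = 2 * (a + 2) := Real.sq_sqrt (by linarith only [ha])
      have e2 : (Real.sqrt n * r) ^ 2 = (n : ℝ) * Real.sqrt n := by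
        rw [mul_pow, hr2, sq, hnss]
      calc (a + 2) * ((n : ℝ) * Real.log n) ≤ (a + 2) * ((n : ℝ) * (2 * Real.sqrt n)) := by
            apply mul_le_mul_of_nonneg_left _ (by linarith only [ha])
            apply mul_le_mul_of_nonneg_left hlog2 hn0.le
        _ = (2 * (a + 2)) * ((n : ℝ) * Real.sqrt n) := by ring
        _ = (Real.sqrt (2 * (a + 2)) * (Real.sqrt n * r)) ^ 2 := by
            rw [mul_pow, e1, e2]
    calc B ≤ Real.sqrt ((Real.sqrt (2 * (a + 2)) * (Real.sqrt n * r)) ^ 2) :=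
          Real.sqrt_le_sqrt hle
      _ = Real.sqrt (2 * (a + 2)) * (Real.sqrt n * r) := Real.sqrt_sq hy0
  have h12B : 12 * B ≤ (n : ℝ) / 4 := by
    have h48 : 48 * Real.sqrt (2 * (a + 2)) ≤ C₀ := by rw [hC₀def]; linarith only []
    have h1 : 12 * Real.sqrt (2 * (a + 2)) ≤ r / 4 := by linarith only [h48, hrC]
    calc 12 * B ≤ 12 * (Real.sqrt (2 * (a + 2)) * (Real.sqrt n * r)) :=
          mul_le_mul_of_nonneg_left hBr (by norm_num)
      _ = (12 * Real.sqrt (2 * (a + 2))) * (Real.sqrt n * r) := by ring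
      _ ≤ (r / 4) * (Real.sqrt n * r) := by
          apply mul_le_mul_of_nonneg_right h1 (by positivity)
      _ = (Real.sqrt n * r ^ 2) / 4 := by ring
      _ = (n : ℝ) / 4 := by rw [hr2, hnss]
  have hsqn : 2304 * Real.sqrt n ≤ (n : ℝ) := by
    nlinarith only [hsn48, hnss, hsn0]
  have hC3 : 12 * B + 4 * Real.sqrt n + 12 ≤ (n : ℝ) / 2 := by
    linarith only [h12B, hsqn, hsn48]
  -- the window length L
  set W : ℝ := Real.sqrt ((n : ℝ) / Real.log n) with hWdef
  have hW0 : 0 ≤ W := Real.sqrt_nonneg _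
  have hW2 : (2 : ℝ) ≤ W := by
    rw [hWdef, show (2:ℝ) = Real.sqrt 4 by
      rw [show (4:ℝ) = 2^2 by norm_num, Real.sqrt_sq]; norm_num]
    apply Real.sqrt_le_sqrt
    have h1 : (n : ℝ) / (2 * Real.sqrt n) ≤ (n : ℝ) / Real.log n :=
      div_le_div_of_nonneg_left hn0.le hlogpos hlog2
    have h2 : (n : ℝ) / (2 * Real.sqrt n) = Real.sqrt n / 2 := by
      rw [div_eq_div_iff (by positivity) (by norm_num : (2:ℝ) ≠ 0)]
      have hsq : Real.sqrt n ^ 2 = (n : ℝ) := Real.sq_sqrt hn0.le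
      linear_combination (-2 : ℝ) * hsq
    linarith only [h1, h2, hsn48]
  set L : ℕ := ⌊W⌋₊ with hLdef
  have hLW : (L : ℝ) ≤ W := Nat.floor_le hW0
  have hL1 : 1 ≤ L := Nat.le_floor (by exact_mod_cast (by linarith only [hW2] : (1:ℝ) ≤ W))
  have hL1R : (1 : ℝ) ≤ (L : ℝ) := by exact_mod_cast hL1
  have hWL : W ≤ 2 * (L : ℝ) := by
    have h' := Nat.lt_floor_add_one W
    push_cast at h'
    linarith only [h', hL1R]
  have hLsn : (L : ℝ) ≤ Real.sqrt n := by
    calc (L : ℝ) ≤ W := hLW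
      _ ≤ Real.sqrt n := Real.sqrt_le_sqrt (by
          rw [div_le_iff₀ hlogpos]
          have h' := mul_le_mul_of_nonneg_left hlog1 hn0.le
          linarith only [h'])
  have hmR : (m : ℝ) ≤ ((n : ℝ) + 1) / 2 := by
    have h' : ((2 * m : ℕ) : ℝ) ≤ ((n + 1 : ℕ) : ℝ) := by exact_mod_cast hm2
    push_cast at h'
    linarith only [h']
  have htR : (t : ℝ) = (m : ℝ) + (D : ℝ) := by exact_mod_cast congrArg (Nat.cast (R := ℝ)) htD
  have htL : t + L ≤ n := by
    have hreal : ((t + L : ℕ) : ℝ) ≤ (n : ℝ) := by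
      push_cast
      rw [htR]
      linarith only [hC3, hB0, hsn0, hDb, hLsn, hmR]
    exact_mod_cast hreal
  -- lower bound for the sum
  set ε : ℝ := (4 * (D : ℝ) + 4 * (L : ℝ)) / n with hεdef
  have hε0 : 0 ≤ ε := by positivity
  have hεn : ε * (n : ℝ) = 4 * (D : ℝ) + 4 * (L : ℝ) := by
    rw [hεdef]; field_simp
  have hε : ε ≤ 1 / 2 := by
    rw [hεdef, div_le_iff₀ hn0]
    linarith only [hDb, hLsn, hC3, hB0, hsn0]
  have hrat : ∀ j : ℕ, t ≤ j → j < t + L → (1 - ε) * ((j : ℝ) + 1) ≤ ((n : ℝ) - j) := by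
    intro j hj1 hj2
    have hjR2 : (j : ℝ) + 1 ≤ (t : ℝ) + (L : ℝ) := by
      have h' : j + 1 ≤ t + L := hj2
      exact_mod_cast h'
    have hjn2 : (n : ℝ) / 2 ≤ (j : ℝ) + 1 := by
      have hjR1 : (t : ℝ) ≤ (j : ℝ) := by exact_mod_cast hj1
      linarith only [ht2, hjR1]
    have h1 : ε * ((n : ℝ) / 2) ≤ ε * ((j : ℝ) + 1) :=
      mul_le_mul_of_nonneg_left hjn2 hε0
    have h2 : ε * ((n : ℝ) / 2) = 2 * (D : ℝ) + 2 * (L : ℝ) := by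
      rw [show ε * ((n:ℝ)/2) = (ε * n)/2 by ring, hεn]; ring
    have h2m : 2 * (m : ℝ) ≤ (n : ℝ) + 1 := by
      have h' : ((2 * m : ℕ) : ℝ) ≤ ((n + 1 : ℕ) : ℝ) := by exact_mod_cast hm2
      push_cast at h'
      linarith only [h']
    have h3 : 2 * (j : ℝ) + 1 - (n : ℝ) ≤ 2 * (D : ℝ) + 2 * (L : ℝ) := by
      linarith only [hjR2, htR, h2m]
    linarith only [h1, h2, h3]
  have hq0 : (0 : ℝ) ≤ 1 - ε := by linarith only [hε]
  have hq1 : 1 - ε ≤ 1 := by linarith only [hε0]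
  have hqexp : Real.exp (-(2 * ε)) ≤ 1 - ε := by
    have h1 : 1 + 2 * ε ≤ Real.exp (2 * ε) := by
      have h' := Real.add_one_le_exp (2 * ε)
      linarith only [h']
    have h2 : Real.exp (-(2 * ε)) * Real.exp (2 * ε) = 1 := by
      rw [← Real.exp_add]; simp
    have h3 : (1 : ℝ) ≤ (1 - ε) * (1 + 2 * ε) := by
      nlinarith only [mul_nonneg hε0 (show (0:ℝ) ≤ 1 - 2 * ε by linarith only [hε])]
    have h4 : 1 ≤ (1 - ε) * Real.exp (2 * ε) := by
      calc (1 : ℝ) ≤ (1 - ε) * (1 + 2 * ε) := h3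
        _ ≤ (1 - ε) * Real.exp (2 * ε) := mul_le_mul_of_nonneg_left h1 hq0
    have h6 : Real.exp (-(2 * ε)) * Real.exp (2 * ε) ≤ (1 - ε) * Real.exp (2 * ε) := by
      rw [h2]; exact h4
    exact le_of_mul_le_mul_right h6 (Real.exp_pos _)
  have hlogne : Real.log n ≠ 0 := ne_of_gt hlogpos
  have hBL : B * (L : ℝ) ≤ Real.sqrt (a + 2) * (n : ℝ) := by
    calc B * (L : ℝ) ≤ B * W := mul_le_mul_of_nonneg_left hLW hB0
      _ = Real.sqrt (((a + 2) * ((n : ℝ) * Real.log n)) * ((n : ℝ) / Real.log n)) := by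
          rw [hBdef, hWdef, ← Real.sqrt_mul (by positivity)]
      _ = Real.sqrt ((a + 2) * ((n : ℝ) * (n : ℝ))) := by
          congr 1
          field_simp
      _ = Real.sqrt (a + 2) * (n : ℝ) := by
          rw [show (a + 2) * ((n : ℝ) * (n : ℝ)) = (a+2) * (n:ℝ)^2 by ring,
            Real.sqrt_mul (by linarith only [ha]), Real.sqrt_sq hn0.le]
  have hLL : (L : ℝ) * (L : ℝ) ≤ (n : ℝ) := by
    calc (L : ℝ) * (L : ℝ) ≤ Real.sqrt n * Real.sqrt n :=
          mul_le_mul hLsn hLsn (by positivity) hsn0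
      _ = (n : ℝ) := hnss
  have hLn' : (L : ℝ) ≤ (n : ℝ) := by nlinarith only [hLsn, hsn48, hnss]
  have hεL : ε * (L : ℝ) ≤ 8 * Real.sqrt (a + 2) + 8 := by
    have hDL : (D : ℝ) * L ≤ (2 * B + 1) * L :=
      mul_le_mul_of_nonneg_right hDb (by positivity)
    have key : (4 * (D : ℝ) + 4 * (L : ℝ)) * (L : ℝ) ≤ (8 * Real.sqrt (a + 2) + 8) * n := by
      linarith only [hDL, hBL, hLL, hLn']
    have h' : ε * (L : ℝ) = ((4 * (D : ℝ) + 4 * (L : ℝ)) * (L : ℝ)) / n := by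
      rw [hεdef]; ring
    rw [h', div_le_iff₀ hn0]
    linarith only [key]
  have hqL : Real.exp (-c) ≤ (1 - ε) ^ L := by
    calc Real.exp (-c) ≤ Real.exp ((L : ℝ) * (-(2 * ε))) := by
          apply Real.exp_le_exp.mpr
          rw [hcdef]
          linarith only [hεL]
      _ = (Real.exp (-(2 * ε))) ^ L := by rw [← Real.exp_nat_mul]
      _ ≤ (1 - ε) ^ L := pow_le_pow_left₀ (Real.exp_pos _).le hqexp L
  have hCt : (0 : ℝ) < (n.choose t : ℝ) := by
    exact_mod_cast Nat.choose_pos htn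
  have hlow : W / 2 * Real.exp (-c) * (n.choose t : ℝ) ≤ S := by
    have hsl := sum_lower n t L (1 - ε) hq0 hq1 htL hrat
    have e1 : W / 2 ≤ (L : ℝ) + 1 := by linarith only [hWL, hL1R]
    have e2 : Real.exp (-c) * (n.choose t : ℝ) ≤ (1 - ε) ^ L * (n.choose t : ℝ) :=
      mul_le_mul_of_nonneg_right hqL hCt.le
    calc W / 2 * Real.exp (-c) * (n.choose t : ℝ)
        = W / 2 * (Real.exp (-c) * (n.choose t : ℝ)) := by ring
      _ ≤ ((L : ℝ) + 1) * (Real.exp (-c) * (n.choose t : ℝ)) := by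
          apply mul_le_mul_of_nonneg_right e1 (by positivity)
      _ ≤ ((L : ℝ) + 1) * ((1 - ε) ^ L * (n.choose t : ℝ)) := by
          apply mul_le_mul_of_nonneg_left e2 (by positivity)
      _ ≤ S := hsl
  have hprev : (n.choose (t - 1) : ℝ) ≤ 2 * (n.choose t : ℝ) := by
    have ht1 : 1 ≤ t := by omega
    have hu : t - 1 < n := by omega
    have hstep := choose_step n (t - 1) hu
    rw [show t - 1 + 1 = t by omega] at hstep
    have htr : ((t - 1 : ℕ) : ℝ) = (t : ℝ) - 1 := by
      push_cast [Nat.cast_sub ht1]; ring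
    rw [htr] at hstep
    -- hstep : C(n,t) * t = C(n,t-1) * (n - (t - 1))
    have h3t : 3 * (t : ℝ) ≤ 2 * n + 2 := by
      rw [htR]
      linarith only [hmR, hDb, hC3, hB0, hsn0]
    have htnR : (t : ℝ) ≤ n := by exact_mod_cast htn
    have hpos : (0 : ℝ) < (n : ℝ) - ((t : ℝ) - 1) := by linarith only [htnR]
    have key : (n.choose (t - 1) : ℝ) * ((n : ℝ) - ((t : ℝ) - 1)) ≤
        (2 * (n.choose t : ℝ)) * ((n : ℝ) - ((t : ℝ) - 1)) := by
      calc (n.choose (t - 1) : ℝ) * ((n : ℝ) - ((t : ℝ) - 1)) = (n.choose t : ℝ) * t := by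
            linarith only [hstep]
        _ ≤ (n.choose t : ℝ) * (2 * ((n : ℝ) - ((t : ℝ) - 1))) := by
            apply mul_le_mul_of_nonneg_left _ hCt.le
            linarith only [h3t]
        _ = (2 * (n.choose t : ℝ)) * ((n : ℝ) - ((t : ℝ) - 1)) := by ring
    exact le_of_mul_le_mul_right key hpos
  -- final assembly
  rw [div_le_iff₀ hS0]
  have hprod : Real.sqrt (Real.log n / n) * W = 1 := by
    rw [hWdef, ← Real.sqrt_mul (by positivity)]
    rw [show Real.log n / n * ((n : ℝ) / Real.log n) = 1 by
      field_simp]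
    exact Real.sqrt_one
  have hexpc : Real.exp c * Real.exp (-c) = 1 := by rw [← Real.exp_add]; simp
  have key2 : (4 * Real.exp c) * Real.sqrt (Real.log n / n) * (W / 2 * Real.exp (-c)) = 2 := by
    have h' : (4 * Real.exp c) * Real.sqrt (Real.log n / n) * (W / 2 * Real.exp (-c))
        = 2 * ((Real.exp c * Real.exp (-c)) * (Real.sqrt (Real.log n / n) * W)) := by ring
    rw [h', hexpc, hprod]; norm_num
  calc (n.choose (t - 1) : ℝ) ≤ 2 * (n.choose t : ℝ) := hprev
    _ = (4 * Real.exp c) * Real.sqrt (Real.log n / n) * (W / 2 * Real.exp (-c)) *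
        (n.choose t : ℝ) := by rw [key2]
    _ = (4 * Real.exp c) * Real.sqrt (Real.log n / n) *
        (W / 2 * Real.exp (-c) * (n.choose t : ℝ)) := by ring
    _ ≤ (4 * Real.exp c) * Real.sqrt (Real.log n / n) * S := by
        apply mul_le_mul_of_nonneg_left hlow (by positivity)
end
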